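/- There exists a constant C > 0 such that for every integer n ≥ 1 and every continuously differentiable function u : [0,1] → ℝ with u(0) = u(1) = 0, the (almost everywhere defined) derivative of the piecewise-linear function 𝔍_n u satisfies ∫₀¹ ((𝔍_n u)′(x))² dx ≤ C ∫₀¹ (u′(x))² dx. -/

import Mathlib

open MeasureTheory Set

/-- The hat function `𝔢_{i,n}`: continuous, piecewise linear, supported on
`[(i-1)h_n, (i+1)h_n]` with `h_n = 1/(n+1)`, affine on each of the two subintervals,
and with peak value `𝔢_{i,n}(i h_n) = h_n^{-1/2} = √(n+1)`. -/
noncomputable def hatFn (n i : ℕ) : ℝ → ℝ := fun x =>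
  Real.sqrt ((n : ℝ) + 1) * max 0 (1 - |((n : ℝ) + 1) * x - (i : ℝ)|)

/-- The piecewise-linear projection `𝔍_n u = ∑_{i=1}^n (∫₀¹ u 𝔢_{i,n}) 𝔢_{i,n}`. -/
noncomputable def Jn (n : ℕ) (u : ℝ → ℝ) : ℝ → ℝ := fun x =>
  ∑ i ∈ Finset.Icc 1 n, (∫ y in (0:ℝ)..1, u y * hatFn n i y) * hatFn n i x

lemma hat_nonneg (n i : ℕ) (x : ℝ) : 0 ≤ hatFn n i x := by
  unfold hatFn; positivity

lemma hat_cont (n i : ℕ) : Continuous (hatFn n i) := by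
  unfold hatFn
  exact continuous_const.mul ((continuous_const.max
    (continuous_const.sub (((continuous_const.mul continuous_id).sub continuous_const).abs))))

lemma hat_eq_zero {n i : ℕ} {x : ℝ} (hx : 1 ≤ |((n : ℝ) + 1) * x - (i : ℝ)|) :
    hatFn n i x = 0 := by
  unfold hatFn
  rw [max_eq_left (by linarith), mul_zero]

lemma hat_eq_left {n k : ℕ} {x : ℝ} (h1 : (k : ℝ) ≤ ((n:ℝ)+1) * x)
    (h2 : ((n:ℝ)+1) * x ≤ (k : ℝ) + 1) :
    hatFn n k x = Real.sqrt ((n:ℝ)+1) * (((k:ℝ)+1) - ((n:ℝ)+1)*x) := by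
  unfold hatFn
  rw [abs_of_nonneg (by linarith), max_eq_right (by linarith)]
  ring_nf

lemma hat_eq_right {n k : ℕ} {x : ℝ} (h1 : (k : ℝ) ≤ ((n:ℝ)+1) * x)
    (h2 : ((n:ℝ)+1) * x ≤ (k : ℝ) + 1) :
    hatFn n (k+1) x = Real.sqrt ((n:ℝ)+1) * (((n:ℝ)+1)*x - (k:ℝ)) := by
  unfold hatFn
  push_cast
  rw [abs_of_nonpos (by linarith), max_eq_right (by linarith)]
  ring_nf

/-- Cauchy–Schwarz for interval integrals. -/
lemma cs_integral {f : ℝ → ℝ} {a b : ℝ} (hab : a ≤ b)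
    (hf : ContinuousOn f (Set.Icc a b)) :
    (∫ t in a..b, |f t|)^2 ≤ (b - a) * ∫ t in a..b, (f t)^2 := by
  rcases eq_or_lt_of_le hab with rfl | hlt
  · simp
  · have hL : 0 < b - a := by linarith
    have habs : ContinuousOn (fun t => |f t|) (Set.Icc a b) := hf.abs
    have hiabs : IntervalIntegrable (fun t => |f t|) volume a b :=
      ContinuousOn.intervalIntegrable (by rw [uIcc_of_le hab]; exact habs)
    have hisq : IntervalIntegrable (fun t => (f t)^2) volume a b :=
      ContinuousOn.intervalIntegrable (by rw [uIcc_of_le hab]; exact hf.pow 2)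
    set I := ∫ t in a..b, |f t| with hI
    set m := I / (b - a) with hm
    have key : 0 ≤ ∫ t in a..b, (|f t| - m)^2 :=
      intervalIntegral.integral_nonneg hab (fun t _ => sq_nonneg _)
    have expand : ∫ t in a..b, (|f t| - m)^2
        = (∫ t in a..b, (f t)^2) - 2*m*I + m^2*(b-a) := by
      have : ∀ t, (|f t| - m)^2 = (f t)^2 - (2*m)*|f t| + m^2 := by
        intro t; rw [sub_sq, sq_abs]; ring
      rw [intervalIntegral.integral_congr (g := fun t => (f t)^2 - (2*m)*|f t| + m^2)
        (fun t _ => this t)]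
      rw [intervalIntegral.integral_add (hisq.sub (hiabs.const_mul _))
        intervalIntegrable_const,
        intervalIntegral.integral_sub hisq (hiabs.const_mul _),
        intervalIntegral.integral_const_mul, intervalIntegral.integral_const]
      simp only [smul_eq_mul, ← hI]
      ring
    rw [expand] at key
    have hmI : m * (b - a) = I := by rw [hm]; exact div_mul_cancel₀ I (ne_of_gt hL)
    nlinarith [sq_nonneg I, sq_nonneg m]

/-- If `f = c` on `Ioo a b` with `a ≤ b`, then `f` is interval integrable. -/
lemma intervalIntegrable_of_const {f : ℝ → ℝ} {a b c : ℝ} (hab : a ≤ b)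
    (h : ∀ x ∈ Set.Ioo a b, f x = c) : IntervalIntegrable f volume a b := by
  rw [intervalIntegrable_iff]
  have h1 : volume.restrict (Set.uIoc a b) = volume.restrict (Set.Ioo a b) := by
    rw [uIoc_of_le hab]
    exact Measure.restrict_congr_set Ioo_ae_eq_Ioc.symm
  unfold IntegrableOn
  rw [h1]
  exact (integrableOn_const (ne_of_lt measure_Ioo_lt_top)).congr_fun
    (fun x hx => (h x hx).symm) measurableSet_Ioo

lemma integral_of_const {f : ℝ → ℝ} {a b c : ℝ} (hab : a ≤ b)
    (h : ∀ x ∈ Set.Ioo a b, f x = c) : ∫ x in a..b, f x = c * (b - a) := by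
  have hae : ∀ᵐ x ∂(volume : Measure ℝ), x ∈ Set.uIoc a b → f x = c := by
    have hb : ∀ᵐ x : ℝ ∂volume, x ≠ b := by
      rw [ae_iff]
      simp only [not_not]; simpa using measure_singleton (μ := (volume : Measure ℝ)) b
    filter_upwards [hb] with x hx hmem
    rw [uIoc_of_le hab] at hmem
    exact h x ⟨hmem.1, lt_of_le_of_ne hmem.2 hx⟩
  rw [intervalIntegral.integral_congr_ae hae, intervalIntegral.integral_const,
    smul_eq_mul, mul_comm]

/-- If `f` agrees with an affine function on an open set containing `x`,
then `deriv f x` is the slope. -/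
lemma deriv_of_affine_eqOn {f : ℝ → ℝ} {s : Set ℝ} {A B x : ℝ} (hs : IsOpen s)
    (hx : x ∈ s) (h : ∀ y ∈ s, f y = A + B * y) : deriv f x = B := by
  have heq : f =ᶠ[nhds x] (fun y => A + B * y) :=
    Filter.eventuallyEq_of_mem (hs.mem_nhds hx) h
  rw [heq.deriv_eq]
  have : HasDerivAt (fun y : ℝ => A + B * y) B x := by
    simpa using ((hasDerivAt_id x).const_mul B).const_add A
  exact this.deriv

noncomputable def coefs (n : ℕ) (u : ℝ → ℝ) (i : ℕ) : ℝ :=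
  if i ∈ Finset.Icc 1 n then ∫ y in (0:ℝ)..1, u y * hatFn n i y else 0

lemma Jn_eq_two_terms (n : ℕ) (u : ℝ → ℝ) {k : ℕ} (hk : k ≤ n) {x : ℝ}
    (hx : x ∈ Set.Ioo ((k:ℝ)/((n:ℝ)+1)) (((k:ℝ)+1)/((n:ℝ)+1))) :
    Jn n u x = coefs n u k * hatFn n k x + coefs n u (k+1) * hatFn n (k+1) x := by
  have hN : (0:ℝ) < (n:ℝ)+1 := by positivity
  have hx1 : (k:ℝ) < ((n:ℝ)+1)*x := by
    rw [mul_comm]; exact (div_lt_iff₀ hN).mp hx.1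
  have hx2 : ((n:ℝ)+1)*x < (k:ℝ)+1 := by
    rw [mul_comm]; exact (lt_div_iff₀ hN).mp hx.2
  unfold Jn
  have step1 : ∑ i ∈ Finset.Icc 1 n,
      (∫ y in (0:ℝ)..1, u y * hatFn n i y) * hatFn n i x
      = ∑ i ∈ Finset.Icc 0 (n+1), coefs n u i * hatFn n i x := by
    rw [Finset.sum_congr rfl (fun i hi => by rw [show (∫ y in (0:ℝ)..1, u y * hatFn n i y) = coefs n u i from (if_pos hi).symm])]
    apply Finset.sum_subset
    · intro i hi; simp only [Finset.mem_Icc] at *; omega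
    · intro i _ hi
      rw [coefs, if_neg hi, zero_mul]
  rw [step1]
  have step2 : ∑ i ∈ Finset.Icc 0 (n+1), coefs n u i * hatFn n i x
      = ∑ i ∈ ({k, k+1} : Finset ℕ), coefs n u i * hatFn n i x := by
    symm
    apply Finset.sum_subset
    · intro i hi
      simp only [Finset.mem_insert, Finset.mem_singleton] at hi
      simp only [Finset.mem_Icc]
      omega
    · intro i _ hi
      simp only [Finset.mem_insert, Finset.mem_singleton, not_or] at hi
      have : hatFn n i x = 0 := by
        apply hat_eq_zero
        rcases lt_or_gt_of_ne hi.1 with h | h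
        · -- i < k
          have : (i:ℝ) + 1 ≤ (k:ℝ) := by exact_mod_cast h
          rw [abs_of_nonneg (by linarith)]
          linarith
        · -- i > k, i ≠ k+1 so i ≥ k+2
          have hik : k + 2 ≤ i := by omega
          have : (k:ℝ) + 2 ≤ (i:ℝ) := by exact_mod_cast hik
          rw [abs_of_nonpos (by linarith)]
          linarith
      rw [this, mul_zero]
  rw [step2, Finset.sum_pair (by omega)]

lemma deriv_Jn_eq (n : ℕ) (u : ℝ → ℝ) {k : ℕ} (hk : k ≤ n) {x : ℝ}
    (hx : x ∈ Set.Ioo ((k:ℝ)/((n:ℝ)+1)) (((k:ℝ)+1)/((n:ℝ)+1))) :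
    deriv (Jn n u) x
      = Real.sqrt ((n:ℝ)+1) * ((n:ℝ)+1) * (coefs n u (k+1) - coefs n u k) := by
  have hN : (0:ℝ) < (n:ℝ)+1 := by positivity
  apply deriv_of_affine_eqOn (A := Real.sqrt ((n:ℝ)+1) *
      (coefs n u k * ((k:ℝ)+1) - coefs n u (k+1) * (k:ℝ))) isOpen_Ioo hx
  intro y hy
  have hy1 : (k:ℝ) ≤ ((n:ℝ)+1)*y := by
    rw [mul_comm]; exact le_of_lt ((div_lt_iff₀ hN).mp hy.1)
  have hy2 : ((n:ℝ)+1)*y ≤ (k:ℝ)+1 := by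
    rw [mul_comm]; exact le_of_lt ((lt_div_iff₀ hN).mp hy.2)
  rw [Jn_eq_two_terms n u hk hy, hat_eq_left hy1 hy2, hat_eq_right hy1 hy2]
  ring

lemma hat_eq_up {n i : ℕ} {x : ℝ} (h1 : (i:ℝ) - 1 ≤ ((n:ℝ)+1) * x)
    (h2 : ((n:ℝ)+1) * x ≤ (i : ℝ)) :
    hatFn n i x = Real.sqrt ((n:ℝ)+1) * (((n:ℝ)+1)*x - ((i:ℝ) - 1)) := by
  unfold hatFn
  rw [abs_of_nonpos (by linarith), max_eq_right (by linarith)]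
  ring_nf

lemma hat_eq_down {n i : ℕ} {x : ℝ} (h1 : (i:ℝ) ≤ ((n:ℝ)+1) * x)
    (h2 : ((n:ℝ)+1) * x ≤ (i : ℝ) + 1) :
    hatFn n i x = Real.sqrt ((n:ℝ)+1) * (((i:ℝ) + 1) - ((n:ℝ)+1)*x) := by
  unfold hatFn
  rw [abs_of_nonneg (by linarith), max_eq_right (by linarith)]
  ring_nf

lemma integral_affine (c d a b : ℝ) :
    ∫ y in a..b, (c*y + d) = c*(b^2-a^2)/2 + d*(b-a) := by
  have h1 : IntervalIntegrable (fun y : ℝ => c*y) volume a b :=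
    Continuous.intervalIntegrable (by continuity) _ _
  rw [intervalIntegral.integral_add h1 intervalIntegrable_const,
    intervalIntegral.integral_const_mul, integral_id, intervalIntegral.integral_const]
  simp only [smul_eq_mul]
  ring

lemma hat_integral (n : ℕ) {i : ℕ} (h1 : 1 ≤ i) (h2 : i ≤ n) :
    ∫ y in (((i:ℝ)-1)/((n:ℝ)+1))..(((i:ℝ)+1)/((n:ℝ)+1)), hatFn n i y
      = Real.sqrt ((n:ℝ)+1) / ((n:ℝ)+1) := by
  have hN : (0:ℝ) < (n:ℝ)+1 := by positivity
  set N := (n:ℝ)+1 with hNdef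
  set s := Real.sqrt N with hsdef
  have hsplit := intervalIntegral.integral_add_adjacent_intervals
    (a := ((i:ℝ)-1)/N) (b := (i:ℝ)/N) (c := ((i:ℝ)+1)/N)
    (f := hatFn n i) (μ := volume)
    ((hat_cont n i).intervalIntegrable _ _) ((hat_cont n i).intervalIntegrable _ _)
  rw [← hsplit]
  have hd1 : ((i:ℝ)-1)/N ≤ (i:ℝ)/N := by gcongr <;> linarith
  have hd2 : (i:ℝ)/N ≤ ((i:ℝ)+1)/N := by gcongr <;> linarith
  have e1 : ∫ y in (((i:ℝ)-1)/N)..((i:ℝ)/N), hatFn n i y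
      = ∫ y in (((i:ℝ)-1)/N)..((i:ℝ)/N), ((s*N)*y + (-(s*((i:ℝ)-1)))) := by
    apply intervalIntegral.integral_congr
    intro y hy
    rw [uIcc_of_le hd1] at hy
    have hy1 : (i:ℝ) - 1 ≤ N * y := by
      rw [mul_comm]; exact (div_le_iff₀ hN).mp hy.1
    have hy2 : N * y ≤ (i:ℝ) := by
      rw [mul_comm]; exact (le_div_iff₀ hN).mp hy.2
    rw [hat_eq_up hy1 hy2]; ring
  have e2 : ∫ y in ((i:ℝ)/N)..(((i:ℝ)+1)/N), hatFn n i y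
      = ∫ y in ((i:ℝ)/N)..(((i:ℝ)+1)/N), ((-(s*N))*y + (s*((i:ℝ)+1))) := by
    apply intervalIntegral.integral_congr
    intro y hy
    rw [uIcc_of_le hd2] at hy
    have hy1 : (i:ℝ) ≤ N * y := by
      rw [mul_comm]; exact (div_le_iff₀ hN).mp hy.1
    have hy2 : N * y ≤ (i:ℝ) + 1 := by
      rw [mul_comm]; exact (le_div_iff₀ hN).mp hy.2
    rw [hat_eq_down hy1 hy2]; ring
  rw [e1, e2, integral_affine, integral_affine]
  field_simp
  ring

section
variable {u : ℝ → ℝ} (hu : ContDiffOn ℝ 1 u (Set.Icc 0 1))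

include hu in
lemma g_cont : ContinuousOn (derivWithin u (Set.Icc 0 1)) (Set.Icc 0 1) :=
  hu.continuousOn_derivWithin (uniqueDiffOn_Icc zero_lt_one) le_rfl

include hu in
lemma ftc {a b : ℝ} (ha : 0 ≤ a) (hab : a ≤ b) (hb : b ≤ 1) :
    u b - u a = ∫ t in a..b, derivWithin u (Set.Icc 0 1) t := by
  have hsub : Set.Icc a b ⊆ Set.Icc 0 1 := Set.Icc_subset_Icc ha hb
  symm
  apply intervalIntegral.integral_eq_sub_of_hasDeriv_right_of_le hab
    (hu.continuousOn.mono hsub)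
  · intro x hx
    have hx01 : x ∈ Set.Icc (0:ℝ) 1 := ⟨le_of_lt (lt_of_le_of_lt ha hx.1),
      le_of_lt (lt_of_lt_of_le hx.2 hb)⟩
    have hd : HasDerivWithinAt u (derivWithin u (Set.Icc 0 1) x) (Set.Icc 0 1) x :=
      (hu.differentiableOn one_ne_zero x hx01).hasDerivWithinAt
    apply hd.mono_of_mem_nhdsWithin
    apply Filter.mem_of_superset (Ioc_mem_nhdsGT_of_mem
      (⟨le_refl x, lt_of_lt_of_le hx.2 hb⟩ : x ∈ Set.Ico x 1))
    exact Set.Ioc_subset_Icc_self.trans (Set.Icc_subset_Icc (le_of_lt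
      (lt_of_le_of_lt ha hx.1)) le_rfl)
  · apply ContinuousOn.intervalIntegrable
    rw [uIcc_of_le hab]
    exact (g_cont hu).mono hsub

include hu in
lemma u_osc {a b p q : ℝ} (ha : 0 ≤ a) (hb : b ≤ 1) (hp : p ∈ Set.Icc a b)
    (hq : q ∈ Set.Icc a b) :
    |u q - u p| ≤ ∫ t in a..b, |derivWithin u (Set.Icc 0 1) t| := by
  set g := derivWithin u (Set.Icc 0 1)
  have hab : a ≤ b := le_trans hp.1 hp.2
  have hgi : IntervalIntegrable (fun t => |g t|) volume a b :=
    ContinuousOn.intervalIntegrable (by rw [uIcc_of_le hab]; exact ((g_cont hu).mono (Set.Icc_subset_Icc ha hb)).abs)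
  have key : ∀ p q : ℝ, p ∈ Set.Icc a b → q ∈ Set.Icc a b → p ≤ q →
      |u q - u p| ≤ ∫ t in a..b, |g t| := by
    intro p q hp hq hpq
    rw [ftc hu (le_trans ha hp.1) hpq (le_trans hq.2 hb)]
    refine le_trans (intervalIntegral.abs_integral_le_integral_abs hpq) ?_
    apply intervalIntegral.integral_mono_interval hp.1 hpq hq.2
    · filter_upwards with x using abs_nonneg _
    · exact hgi
  rcases le_total p q with h | h
  · exact key p q hp hq h
  · rw [abs_sub_comm]; exact key q p hq hp h

include hu in
lemma coef_est (n : ℕ) {i : ℕ} (h1 : 1 ≤ i) (h2 : i ≤ n) :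
    |coefs n u i - Real.sqrt ((n:ℝ)+1) / ((n:ℝ)+1) * u ((i:ℝ)/((n:ℝ)+1))|
      ≤ Real.sqrt ((n:ℝ)+1) / ((n:ℝ)+1) *
        ∫ t in (((i:ℝ)-1)/((n:ℝ)+1))..(((i:ℝ)+1)/((n:ℝ)+1)),
          |derivWithin u (Set.Icc 0 1) t| := by
  have hN : (0:ℝ) < (n:ℝ)+1 := by positivity
  set N := (n:ℝ)+1 with hNdef
  set s := Real.sqrt N with hsdef
  set g := derivWithin u (Set.Icc 0 1) with hgdef
  set a := ((i:ℝ)-1)/N with hadef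
  set b := ((i:ℝ)+1)/N with hbdef
  set m := (i:ℝ)/N with hmdef
  have hi1 : (1:ℝ) ≤ (i:ℝ) := by exact_mod_cast h1
  have hi2 : (i:ℝ) ≤ (n:ℝ) := by exact_mod_cast h2
  have ha0 : 0 ≤ a := by rw [hadef]; apply div_nonneg (by linarith) (le_of_lt hN)
  have hb1 : b ≤ 1 := by rw [hbdef]; rw [div_le_one hN]; linarith
  have hab : a ≤ b := by rw [hadef, hbdef]; gcongr <;> linarith
  have ham : a ≤ m := by rw [hadef, hmdef]; gcongr <;> linarith
  have hmb : m ≤ b := by rw [hmdef, hbdef]; gcongr <;> linarith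
  have hsub : Set.Icc a b ⊆ Set.Icc 0 1 := Set.Icc_subset_Icc ha0 hb1
  have hucont : ContinuousOn u (Set.Icc 0 1) := hu.continuousOn
  -- integrability of u * hat on subintervals of [0,1]
  have huh : ∀ c d : ℝ, 0 ≤ c → c ≤ 1 → 0 ≤ d → d ≤ 1 →
      IntervalIntegrable (fun y => u y * hatFn n i y) volume c d := by
    intro c d hc0 hc1 hd0 hd1
    apply ContinuousOn.intervalIntegrable
    apply ContinuousOn.mul (hucont.mono ?_) (hat_cont n i).continuousOn
    intro x hx
    rcases le_total c d with h | h
    · rw [uIcc_of_le h] at hx; exact ⟨le_trans hc0 hx.1, le_trans hx.2 hd1⟩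
    · rw [uIcc_of_ge h] at hx; exact ⟨le_trans hd0 hx.1, le_trans hx.2 hc1⟩
  -- restrict integral to window
  have hwin : (∫ y in (0:ℝ)..1, u y * hatFn n i y)
      = ∫ y in a..b, u y * hatFn n i y := by
    have s1 := intervalIntegral.integral_add_adjacent_intervals
      (a := (0:ℝ)) (b := a) (c := b) (f := fun y => u y * hatFn n i y) (μ := volume)
      (huh 0 a le_rfl zero_le_one ha0 (le_trans hab hb1))
      (huh a b ha0 (le_trans hab hb1) (le_trans ha0 hab) hb1)
    have s2 := intervalIntegral.integral_add_adjacent_intervals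
      (a := (0:ℝ)) (b := b) (c := 1) (f := fun y => u y * hatFn n i y) (μ := volume)
      ((huh 0 a le_rfl zero_le_one ha0 (le_trans hab hb1)).trans
        (huh a b ha0 (le_trans hab hb1) (le_trans ha0 hab) hb1))
      (huh b 1 (le_trans ha0 hab) hb1 zero_le_one le_rfl)
    have z1 : (∫ y in (0:ℝ)..a, u y * hatFn n i y) = 0 := by
      have heq : Set.EqOn (fun y => u y * hatFn n i y) (fun _ => (0:ℝ)) (Set.uIcc 0 a) := by
        intro y hy
        rw [uIcc_of_le ha0] at hy
        have hle : N * y ≤ (i:ℝ) - 1 := by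
          rw [mul_comm]; exact (le_div_iff₀ hN).mp hy.2
        simp only
        rw [hat_eq_zero (by simp only [← hNdef]; rw [abs_of_nonpos (by linarith)]; linarith), mul_zero]
      rw [intervalIntegral.integral_congr heq, intervalIntegral.integral_zero]
    have z2 : (∫ y in b..(1:ℝ), u y * hatFn n i y) = 0 := by
      have heq : Set.EqOn (fun y => u y * hatFn n i y) (fun _ => (0:ℝ)) (Set.uIcc b 1) := by
        intro y hy
        rw [uIcc_of_le hb1] at hy
        have hge : (i:ℝ) + 1 ≤ N * y := by
          rw [mul_comm]; exact (div_le_iff₀ hN).mp hy.1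
        simp only
        rw [hat_eq_zero (by simp only [← hNdef]; rw [abs_of_nonneg (by linarith)]; linarith), mul_zero]
      rw [intervalIntegral.integral_congr heq, intervalIntegral.integral_zero]
    rw [← s2, z2, add_zero, ← s1, z1, zero_add]
  -- rewrite difference as single integral
  have hhat_int : IntervalIntegrable (hatFn n i) volume a b :=
    (hat_cont n i).intervalIntegrable _ _
  have hdiff : coefs n u i - s/N * u m
      = ∫ y in a..b, (u y - u m) * hatFn n i y := by
    rw [coefs, if_pos (by simp only [Finset.mem_Icc]; omega), hwin]
    have : ∫ y in a..b, (u y - u m) * hatFn n i y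
        = (∫ y in a..b, u y * hatFn n i y) - u m * ∫ y in a..b, hatFn n i y := by
      rw [← intervalIntegral.integral_const_mul,
        ← intervalIntegral.integral_sub (huh a b ha0 (le_trans hab hb1)
          (le_trans ha0 hab) hb1) (hhat_int.const_mul _)]
      congr 1; funext y; ring
    rw [this, hat_integral n h1 h2]
    ring
  set K := ∫ t in a..b, |g t| with hK
  have hK0 : 0 ≤ K := by
    rw [hK]
    apply intervalIntegral.integral_nonneg hab
    intro t _; exact abs_nonneg _
  have hbound : |∫ y in a..b, (u y - u m) * hatFn n i y| ≤ K * (s/N) := by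
    refine le_trans (intervalIntegral.abs_integral_le_integral_abs hab) ?_
    have step : ∫ y in a..b, |(u y - u m) * hatFn n i y|
        ≤ ∫ y in a..b, K * hatFn n i y := by
      apply intervalIntegral.integral_mono_on hab
      · apply ContinuousOn.intervalIntegrable
        rw [uIcc_of_le hab]
        exact (((hucont.mono hsub).sub continuousOn_const).mul
          (hat_cont n i).continuousOn).abs
      · exact (hhat_int.const_mul _)
      · intro y hy
        rw [abs_mul, abs_of_nonneg (hat_nonneg n i y)]
        apply mul_le_mul_of_nonneg_right ?_ (hat_nonneg n i y)
        exact u_osc hu ha0 hb1 ⟨ham, hmb⟩ hy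
    refine le_trans step ?_
    rw [intervalIntegral.integral_const_mul, hat_integral n h1 h2]
  rw [hdiff]
  calc |∫ y in a..b, (u y - u m) * hatFn n i y| ≤ K * (s/N) := hbound
    _ = s/N * K := by ring
end

noncomputable def DD (n : ℕ) (u : ℝ → ℝ) (j : ℕ) : ℝ :=
  ∫ t in ((j:ℝ)/((n:ℝ)+1))..(((j:ℝ)+1)/((n:ℝ)+1)), |derivWithin u (Set.Icc 0 1) t|
noncomputable def EE (n : ℕ) (u : ℝ → ℝ) (j : ℕ) : ℝ :=
  ∫ t in ((j:ℝ)/((n:ℝ)+1))..(((j:ℝ)+1)/((n:ℝ)+1)), (derivWithin u (Set.Icc 0 1) t)^2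
noncomputable def WW (n : ℕ) (u : ℝ → ℝ) (i : ℕ) : ℝ :=
  ∫ t in (((i:ℝ)-1)/((n:ℝ)+1))..(((i:ℝ)+1)/((n:ℝ)+1)), |derivWithin u (Set.Icc 0 1) t|
noncomputable def bnd (n : ℕ) (u : ℝ → ℝ) (i : ℕ) : ℝ :=
  if 1 ≤ i ∧ i ≤ n then WW n u i else 0
noncomputable def EE' (n : ℕ) (u : ℝ → ℝ) (j : ℕ) : ℝ :=
  if j ≤ n then EE n u j else 0

section
variable {n : ℕ} {u : ℝ → ℝ}

lemma cell_le (n : ℕ) (j : ℕ) : ((j:ℝ))/((n:ℝ)+1) ≤ ((j:ℝ)+1)/((n:ℝ)+1) := by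
  have hN : (0:ℝ) < (n:ℝ)+1 := by positivity
  gcongr
  linarith

lemma cell_sub (n : ℕ) (j : ℕ) : ((j:ℝ)+1)/((n:ℝ)+1) - ((j:ℝ))/((n:ℝ)+1) = 1/((n:ℝ)+1) := by
  have hN : (0:ℝ) < (n:ℝ)+1 := by positivity
  field_simp
  ring

lemma cell_mem01 {k : ℕ} (hk : k ≤ n) :
    (0:ℝ) ≤ (k:ℝ)/((n:ℝ)+1) ∧ ((k:ℝ)+1)/((n:ℝ)+1) ≤ 1 := by
  have hN : (0:ℝ) < (n:ℝ)+1 := by positivity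
  have hkr : (k:ℝ) ≤ (n:ℝ) := by exact_mod_cast hk
  constructor
  · positivity
  · rw [div_le_one hN]; linarith

lemma EE_nonneg (j : ℕ) : 0 ≤ EE n u j :=
  intervalIntegral.integral_nonneg (cell_le n j) (fun t _ => sq_nonneg _)

lemma DD_nonneg (j : ℕ) : 0 ≤ DD n u j :=
  intervalIntegral.integral_nonneg (cell_le n j) (fun t _ => abs_nonneg _)

lemma EE'_nonneg (j : ℕ) : 0 ≤ EE' n u j := by
  unfold EE'; split
  · exact EE_nonneg j
  · exact le_refl 0

lemma bnd_nonneg (i : ℕ) : 0 ≤ bnd n u i := by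
  unfold bnd; split
  · rename_i hi
    apply intervalIntegral.integral_nonneg ?_ (fun t _ => abs_nonneg _)
    have hN : (0:ℝ) < (n:ℝ)+1 := by positivity
    gcongr
    linarith
  · exact le_refl 0

variable (hu : ContDiffOn ℝ 1 u (Set.Icc 0 1))

include hu in
lemma ND_sq_le {j : ℕ} (hj : j ≤ n) : ((n:ℝ)+1) * DD n u j ^ 2 ≤ EE n u j := by
  have hN : (0:ℝ) < (n:ℝ)+1 := by positivity
  have hsub : Set.Icc ((j:ℝ)/((n:ℝ)+1)) (((j:ℝ)+1)/((n:ℝ)+1)) ⊆ Set.Icc 0 1 :=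
    Set.Icc_subset_Icc (cell_mem01 hj).1 (cell_mem01 hj).2
  have := cs_integral (cell_le n j) ((g_cont hu).mono hsub)
  rw [cell_sub] at this
  have h2 : DD n u j ^ 2 ≤ 1/((n:ℝ)+1) * EE n u j := this
  calc ((n:ℝ)+1) * DD n u j ^ 2 ≤ ((n:ℝ)+1) * (1/((n:ℝ)+1) * EE n u j) := by
        gcongr
    _ = EE n u j := by field_simp
end


section
variable {n : ℕ} {u : ℝ → ℝ} (hu : ContDiffOn ℝ 1 u (Set.Icc 0 1))

include hu in
lemma absg_intble {c d : ℝ} (hc0 : 0 ≤ c) (hc1 : c ≤ 1) (hd0 : 0 ≤ d) (hd1 : d ≤ 1) :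
    IntervalIntegrable (fun t => |derivWithin u (Set.Icc 0 1) t|) volume c d := by
  apply ContinuousOn.intervalIntegrable
  apply ContinuousOn.abs
  apply (g_cont hu).mono
  intro x hx
  rcases le_total c d with h | h
  · rw [uIcc_of_le h] at hx; exact ⟨le_trans hc0 hx.1, le_trans hx.2 hd1⟩
  · rw [uIcc_of_ge h] at hx; exact ⟨le_trans hd0 hx.1, le_trans hx.2 hc1⟩

include hu in
lemma WW_split {i : ℕ} (h1 : 1 ≤ i) (h2 : i ≤ n) :
    WW n u i = DD n u (i-1) + DD n u i := by
  have hN : (0:ℝ) < (n:ℝ)+1 := by positivity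
  have hir : (1:ℝ) ≤ (i:ℝ) := by exact_mod_cast h1
  have hnr : (i:ℝ) ≤ (n:ℝ) := by exact_mod_cast h2
  have hcast : ((i-1 : ℕ) : ℝ) = (i:ℝ) - 1 := by
    push_cast [Nat.cast_sub h1]; ring
  have ha0 : (0:ℝ) ≤ ((i:ℝ)-1)/((n:ℝ)+1) := div_nonneg (by linarith) (le_of_lt hN)
  have ha1 : ((i:ℝ)-1)/((n:ℝ)+1) ≤ 1 := by rw [div_le_one hN]; linarith
  have hm0 : (0:ℝ) ≤ (i:ℝ)/((n:ℝ)+1) := by positivity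
  have hm1 : (i:ℝ)/((n:ℝ)+1) ≤ 1 := by rw [div_le_one hN]; linarith
  have hb0 : (0:ℝ) ≤ ((i:ℝ)+1)/((n:ℝ)+1) := by positivity
  have hb1 : ((i:ℝ)+1)/((n:ℝ)+1) ≤ 1 := by rw [div_le_one hN]; linarith
  have hs := intervalIntegral.integral_add_adjacent_intervals
    (a := ((i:ℝ)-1)/((n:ℝ)+1)) (b := (i:ℝ)/((n:ℝ)+1)) (c := ((i:ℝ)+1)/((n:ℝ)+1))
    (f := fun t => |derivWithin u (Set.Icc 0 1) t|) (μ := volume)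
    (absg_intble hu ha0 ha1 hm0 hm1) (absg_intble hu hm0 hm1 hb0 hb1)
  unfold WW DD
  rw [hcast, ← hs]
  norm_num

include hu in
lemma Nbnd_sq_le (i : ℕ) :
    ((n:ℝ)+1) * bnd n u i ^ 2 ≤ 2 * (EE' n u (i-1) + EE' n u i) := by
  have hN : (0:ℝ) < (n:ℝ)+1 := by positivity
  by_cases hc : 1 ≤ i ∧ i ≤ n
  · have hsplit := WW_split hu hc.1 hc.2
    have hb : bnd n u i = DD n u (i-1) + DD n u i := by rw [bnd, if_pos hc, hsplit]
    have hd1 : ((n:ℝ)+1) * DD n u (i-1) ^ 2 ≤ EE n u (i-1) := ND_sq_le hu (by omega)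
    have hd2 : ((n:ℝ)+1) * DD n u i ^ 2 ≤ EE n u i := ND_sq_le hu hc.2
    have he1 : EE' n u (i-1) = EE n u (i-1) := if_pos (by omega)
    have he2 : EE' n u i = EE n u i := if_pos hc.2
    rw [hb, he1, he2]
    nlinarith [sq_nonneg (DD n u (i-1) - DD n u i)]
  · rw [bnd, if_neg hc]
    have e1 := EE'_nonneg (n := n) (u := u) (i-1)
    have e2 := EE'_nonneg (n := n) (u := u) i
    nlinarith

include hu in
lemma coef_bnd (h0 : u 0 = 0) (h1 : u 1 = 0) {i : ℕ} (hi : i ≤ n+1) :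
    |coefs n u i - Real.sqrt ((n:ℝ)+1) / ((n:ℝ)+1) * u ((i:ℝ)/((n:ℝ)+1))|
      ≤ Real.sqrt ((n:ℝ)+1) / ((n:ℝ)+1) * bnd n u i := by
  have hN : (0:ℝ) < (n:ℝ)+1 := by positivity
  by_cases hc : 1 ≤ i ∧ i ≤ n
  · rw [bnd, if_pos hc]
    exact coef_est hu n hc.1 hc.2
  · rw [bnd, if_neg hc]
    have hzero : coefs n u i = 0 := by
      rw [coefs, if_neg]; simp only [Finset.mem_Icc]; omega
    have huz : u ((i:ℝ)/((n:ℝ)+1)) = 0 := by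
      rcases (by omega : i = 0 ∨ i = n+1) with rfl | rfl
      · simpa using h0
      · have hone : (((n+1 : ℕ)):ℝ)/((n:ℝ)+1) = 1 := by
          push_cast; field_simp
        rw [hone, h1]
    rw [hzero, huz]
    simp

include hu in
lemma slope_diff_bnd (h0 : u 0 = 0) (h1 : u 1 = 0) {k : ℕ} (hk : k ≤ n) :
    |coefs n u (k+1) - coefs n u k|
      ≤ Real.sqrt ((n:ℝ)+1) / ((n:ℝ)+1) *
        (DD n u k + bnd n u k + bnd n u (k+1)) := by
  have hN : (0:ℝ) < (n:ℝ)+1 := by positivity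
  have hk01 := cell_mem01 (n := n) hk
  have hcast : (((k+1:ℕ)):ℝ)/((n:ℝ)+1) = ((k:ℝ)+1)/((n:ℝ)+1) := by push_cast; ring_nf
  have hudiff : |u (((k:ℝ)+1)/((n:ℝ)+1)) - u ((k:ℝ)/((n:ℝ)+1))| ≤ DD n u k := by
    rw [ftc hu hk01.1 (cell_le n k) hk01.2]
    exact intervalIntegral.abs_integral_le_integral_abs (cell_le n k)
  have r1 := coef_bnd hu h0 h1 (show k ≤ n+1 by omega)
  have r2 := coef_bnd hu h0 h1 (show k+1 ≤ n+1 by omega)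
  rw [hcast] at r2
  have hs0 : (0:ℝ) ≤ Real.sqrt ((n:ℝ)+1)/((n:ℝ)+1) := by positivity
  have decomp : coefs n u (k+1) - coefs n u k
      = (coefs n u (k+1) - Real.sqrt ((n:ℝ)+1)/((n:ℝ)+1) * u (((k:ℝ)+1)/((n:ℝ)+1)))
        - (coefs n u k - Real.sqrt ((n:ℝ)+1)/((n:ℝ)+1) * u ((k:ℝ)/((n:ℝ)+1)))
        + Real.sqrt ((n:ℝ)+1)/((n:ℝ)+1)
          * (u (((k:ℝ)+1)/((n:ℝ)+1)) - u ((k:ℝ)/((n:ℝ)+1))) := by ring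
  rw [decomp]
  refine le_trans (abs_add_le _ _) ?_
  have t1 := le_trans (abs_sub _ _) (add_le_add r2 r1)
  have t2 : |Real.sqrt ((n:ℝ)+1)/((n:ℝ)+1)
      * (u (((k:ℝ)+1)/((n:ℝ)+1)) - u ((k:ℝ)/((n:ℝ)+1)))|
      ≤ Real.sqrt ((n:ℝ)+1)/((n:ℝ)+1) * DD n u k := by
    rw [abs_mul, abs_of_nonneg hs0]
    exact mul_le_mul_of_nonneg_left hudiff hs0
  calc _ ≤ (Real.sqrt ((n:ℝ)+1)/((n:ℝ)+1) * bnd n u (k+1)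
        + Real.sqrt ((n:ℝ)+1)/((n:ℝ)+1) * bnd n u k)
        + Real.sqrt ((n:ℝ)+1)/((n:ℝ)+1) * DD n u k := add_le_add t1 t2
    _ = _ := by ring
end

/-- There exists `C > 0` such that for every `n ≥ 1` and every `C¹` function
`u : [0,1] → ℝ` with `u(0) = u(1) = 0`, the a.e. derivative of the piecewise-linear
function `𝔍_n u` satisfies `∫₀¹ ((𝔍_n u)'(x))² dx ≤ C ∫₀¹ (u'(x))² dx`. -/
theorem stmt5 :
    ∃ C : ℝ, 0 < C ∧ ∀ n : ℕ, 1 ≤ n → ∀ u : ℝ → ℝ,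
      ContDiffOn ℝ 1 u (Set.Icc 0 1) → u 0 = 0 → u 1 = 0 →
      (∫ x in (0:ℝ)..1, (deriv (Jn n u) x) ^ 2) ≤
        C * ∫ x in (0:ℝ)..1, (derivWithin u (Set.Icc 0 1) x) ^ 2 := by
  refine ⟨33, by norm_num, ?_⟩
  intro n hn u hu h0 h1
  have hN : (0:ℝ) < (n:ℝ)+1 := by positivity
  set N := (n:ℝ)+1 with hNdef
  have hs2 : Real.sqrt N ^ 2 = N := Real.sq_sqrt (le_of_lt hN)
  set a : ℕ → ℝ := fun k => (k:ℝ)/N with hadef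
  have hacast : ∀ k : ℕ, a (k+1) = ((k:ℝ)+1)/N := by
    intro k; simp only [hadef]; push_cast; ring
  set sl : ℕ → ℝ := fun k => Real.sqrt N * N * (coefs n u (k+1) - coefs n u k) with hsl
  have hconst : ∀ k, k ≤ n → ∀ x ∈ Set.Ioo (a k) (a (k+1)),
      (deriv (Jn n u) x)^2 = (sl k)^2 := by
    intro k hk x hx
    rw [hacast k] at hx
    rw [deriv_Jn_eq n u hk hx]
  have hle : ∀ k : ℕ, a k ≤ a (k+1) := by
    intro k; rw [hacast k]; exact cell_le n k
  have hcellint : ∀ k, k ≤ n →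
      (∫ x in a k..a (k+1), (deriv (Jn n u) x)^2) = (sl k)^2 * (1/N) := by
    intro k hk
    rw [integral_of_const (hle k) (hconst k hk)]
    congr 1
    rw [hacast k]
    simp only [hadef]
    exact cell_sub n k
  have hLHS : (∫ x in (0:ℝ)..1, (deriv (Jn n u) x)^2)
      = ∑ k ∈ Finset.range (n+1), (sl k)^2 * (1/N) := by
    have hint : ∀ k, k < n+1 → IntervalIntegrable (fun x => (deriv (Jn n u) x)^2)
        volume (a k) (a (k+1)) := by
      intro k hk
      exact intervalIntegrable_of_const (hle k) (hconst k (by omega))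
    have hsum := intervalIntegral.sum_integral_adjacent_intervals (a := a)
      (μ := volume) (n := n+1) hint
    have h00 : a 0 = 0 := by simp [hadef]
    have h11 : a (n+1) = 1 := by
      rw [hacast n]; rw [hNdef]; field_simp
    rw [h00, h11] at hsum
    rw [← hsum]
    exact Finset.sum_congr rfl (fun k hk =>
      hcellint k (by simp only [Finset.mem_range] at hk; omega))
  have hgsq_int : ∀ k, k < n+1 → IntervalIntegrable
      (fun t => (derivWithin u (Set.Icc 0 1) t)^2) volume (a k) (a (k+1)) := by
    intro k hk
    apply ContinuousOn.intervalIntegrable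
    apply ContinuousOn.pow
    apply (g_cont hu).mono
    rw [uIcc_of_le (hle k), hacast k]
    simp only [hadef]
    exact Set.Icc_subset_Icc (cell_mem01 (by omega : k ≤ n)).1
      (cell_mem01 (by omega : k ≤ n)).2
  have hRHS : (∫ x in (0:ℝ)..1, (derivWithin u (Set.Icc 0 1) x)^2)
      = ∑ k ∈ Finset.range (n+1), EE n u k := by
    have hsum := intervalIntegral.sum_integral_adjacent_intervals (a := a)
      (μ := volume) (n := n+1) hgsq_int
    have h00 : a 0 = 0 := by simp [hadef]
    have h11 : a (n+1) = 1 := by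
      rw [hacast n]; rw [hNdef]; field_simp
    rw [h00, h11] at hsum
    rw [← hsum]
    apply Finset.sum_congr rfl
    intro k hk
    rw [hacast k]
    rfl
  have hper : ∀ k, k ≤ n → (sl k)^2 * (1/N)
      ≤ 6*EE' n u (k-1) + 15*EE' n u k + 6*EE' n u (k+1) := by
    intro k hk
    set c := coefs n u (k+1) - coefs n u k with hc
    set X := DD n u k + bnd n u k + bnd n u (k+1) with hX
    have hX0 : 0 ≤ X := by
      have := DD_nonneg (n := n) (u := u) k
      have := bnd_nonneg (n := n) (u := u) k
      have := bnd_nonneg (n := n) (u := u) (k+1)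
      linarith
    have hcabs : |c| ≤ Real.sqrt N / N * X := slope_diff_bnd hu h0 h1 hk
    have hcsq : c^2 ≤ (1/N) * X^2 := by
      have h' : c^2 ≤ (Real.sqrt N / N * X)^2 := by
        rw [← sq_abs c]
        exact pow_le_pow_left₀ (abs_nonneg c) hcabs 2
      have hA : (Real.sqrt N / N)^2 = 1/N := by
        rw [div_pow, hs2, sq, div_eq_div_iff (by positivity) (by positivity)]
        ring
      calc c^2 ≤ (Real.sqrt N / N * X)^2 := h'
        _ = (Real.sqrt N / N)^2 * X^2 := by rw [mul_pow]
        _ = (1/N) * X^2 := by rw [hA]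
    have step1 : (sl k)^2 * (1/N) ≤ N * X^2 := by
      have e1 : (sl k)^2 * (1/N) = N^2 * c^2 := by
        have e0 : (sl k)^2 = Real.sqrt N ^2 * N^2 * c^2 := by
          simp only [hsl]; ring
        rw [e0, hs2]
        field_simp
      rw [e1]
      calc N^2 * c^2 ≤ N^2 * ((1/N)*X^2) :=
            mul_le_mul_of_nonneg_left hcsq (by positivity)
        _ = N * X^2 := by field_simp
    have hb1 : N * bnd n u k ^2 ≤ 2*(EE' n u (k-1) + EE' n u k) := Nbnd_sq_le hu k
    have hb2 : N * bnd n u (k+1) ^2 ≤ 2*(EE' n u k + EE' n u (k+1)) := by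
      have hnb := Nbnd_sq_le (n := n) hu (k+1)
      simpa using hnb
    have hd : N * DD n u k ^2 ≤ EE' n u k := by
      rw [EE', if_pos hk]
      exact ND_sq_le hu hk
    have step2 : N * X^2 ≤ 3*(N*DD n u k^2) + 3*(N*bnd n u k^2) + 3*(N*bnd n u (k+1)^2) := by
      rw [hX]
      nlinarith [sq_nonneg (DD n u k - bnd n u k), sq_nonneg (DD n u k - bnd n u (k+1)),
        sq_nonneg (bnd n u k - bnd n u (k+1)), hN]
    clear_value X c sl N
    linarith
  set T := ∑ k ∈ Finset.range (n+1), EE' n u k with hT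
  have hTE : T = ∑ k ∈ Finset.range (n+1), EE n u k := by
    apply Finset.sum_congr rfl
    intro k hk
    rw [EE', if_pos (by simp only [Finset.mem_range] at hk; omega)]
  have hS1 : ∑ k ∈ Finset.range (n+1), EE' n u (k-1) ≤ 2*T := by
    rw [Finset.sum_range_succ' (fun k => EE' n u (k-1)) n]
    simp only [Nat.add_sub_cancel, Nat.zero_sub]
    have e1 : ∑ k ∈ Finset.range n, EE' n u k ≤ T :=
      Finset.sum_le_sum_of_subset_of_nonneg
        (Finset.range_subset_range.mpr (by omega)) (fun i _ _ => EE'_nonneg i)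
    have e2 : EE' n u 0 ≤ T :=
      Finset.single_le_sum (fun i _ => EE'_nonneg (n := n) (u := u) i)
        (Finset.mem_range.mpr (by omega))
    linarith
  have hS3 : ∑ k ∈ Finset.range (n+1), EE' n u (k+1) ≤ T := by
    have e1 : ∑ k ∈ Finset.range (n+2), EE' n u k
        = (∑ k ∈ Finset.range (n+1), EE' n u (k+1)) + EE' n u 0 :=
      Finset.sum_range_succ' (EE' n u) (n+1)
    have e2 : ∑ k ∈ Finset.range (n+2), EE' n u k = T + EE' n u (n+1) :=
      Finset.sum_range_succ (EE' n u) (n+1)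
    have e3 : EE' n u (n+1) = 0 := by rw [EE', if_neg (by omega)]
    have e4 := EE'_nonneg (n := n) (u := u) 0
    linarith
  rw [hLHS]
  calc ∑ k ∈ Finset.range (n+1), (sl k)^2 * (1/N)
      ≤ ∑ k ∈ Finset.range (n+1),
        (6*EE' n u (k-1) + 15*EE' n u k + 6*EE' n u (k+1)) :=
        Finset.sum_le_sum (fun k hk =>
          hper k (by simp only [Finset.mem_range] at hk; omega))
    _ = 6*(∑ k ∈ Finset.range (n+1), EE' n u (k-1)) + 15*T
        + 6*(∑ k ∈ Finset.range (n+1), EE' n u (k+1)) := by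
        rw [Finset.sum_add_distrib, Finset.sum_add_distrib,
          ← Finset.mul_sum, ← Finset.mul_sum, ← Finset.mul_sum]
    _ ≤ 6*(2*T) + 15*T + 6*T := by
        have := hS1; have := hS3
        gcongr <;> linarith
    _ = 33*T := by ring
    _ = 33 * ∫ x in (0:ℝ)..1, (derivWithin u (Set.Icc 0 1) x)^2 := by
        rw [hTE, ← hRHS]
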